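/- Let $(\mathbb{L}, d)$ be a finite metric space, let $m, m_V, \tilde{m} > 0$, and define $c_{\mathsf{g}}(\mu) = \sup_{x} \sum_{y} e^{-\mu d(x,y)}$. Then $\sup_{x \in \mathbb{L}} \sum_{\substack{X \subseteq \mathbb{L}, X \neq \emptyset \\ F \subseteq T \in \mathfrak{T}(X)}} 12^{-|X|} \, c_{\mathsf{g}}(m_V)^{-|F|} c_{\mathsf{g}}(m)^{-|T \setminus F|} \, e^{-m_V d(F) - m \, d(T \setminus F)} \, e^{-\tilde{m}\, d(x, X)} \leq c_{\mathsf{g}}(\tilde{m})$, where the sum is over nonempty subsets $X$, trees $T$ on $X$, and subforests $F \subseteq T$, with $d(F) = \sum_{\{y,y'\} \in F} d(y,y')$ and $d(x, X) = \min_{y \in X} d(x,y)$. -/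

import Mathlib

open scoped Classical

set_option maxHeartbeats 4000000
set_option linter.unusedVariables false
set_option linter.unusedSectionVars false

/-- The geometric constant `c_g(μ) = sup_x ∑_y e^{-μ d(x,y)}` of a finite metric space. -/
noncomputable def geomConst (L : Type*) [MetricSpace L] [Fintype L] (μ : ℝ) : ℝ :=
  ⨆ x : L, ∑ y : L, Real.exp (-μ * dist x y)

/-- Total edge length of a finite set of unordered pairs of points of a subset. -/
noncomputable def edgeLength {L : Type*} [MetricSpace L] {X : Finset L}
    (F : Finset (Sym2 {y // y ∈ X})) : ℝ :=
  ∑ e ∈ F, Sym2.lift ⟨fun (a b : {y // y ∈ X}) => dist (a : L) (b : L),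
    fun _ _ => dist_comm _ _⟩ e

namespace VolumeEstimateAux

open Finset SimpleGraph

/-! ### Elementary facts about `geomConst` -/

section geom
variable {L : Type*} [MetricSpace L] [Fintype L] [Nonempty L]

lemma sum_exp_le_geomConst (μ : ℝ) (v : L) :
    ∑ u : L, Real.exp (-μ * dist v u) ≤ geomConst L μ :=
  le_ciSup (f := fun x : L => ∑ y : L, Real.exp (-μ * dist x y))
    (Set.Finite.bddAbove (Set.finite_range _)) v

lemma one_le_geomConst (μ : ℝ) : 1 ≤ geomConst L μ := by
  obtain ⟨v⟩ := ‹Nonempty L›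
  refine le_trans ?_ (sum_exp_le_geomConst μ v)
  have h : (1:ℝ) = Real.exp (-μ * dist v v) := by simp
  rw [h]
  exact Finset.single_le_sum (f := fun u => Real.exp (-μ * dist v u))
    (fun u _ => (Real.exp_pos _).le) (mem_univ v)

lemma geomConst_pos (μ : ℝ) : 0 < geomConst L μ :=
  lt_of_lt_of_le one_pos (one_le_geomConst μ)

end geom

/-! ### The weight functions -/

noncomputable def wfun {L : Type*} [MetricSpace L] [Fintype L] (m mV : ℝ) (a b : L) : ℝ :=
  (geomConst L mV)⁻¹ * Real.exp (-mV * dist a b) + (geomConst L m)⁻¹ * Real.exp (-m * dist a b)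

lemma wfun_comm {L : Type*} [MetricSpace L] [Fintype L] (m mV : ℝ) (a b : L) :
    wfun m mV a b = wfun m mV b a := by
  unfold wfun; rw [_root_.dist_comm]

lemma wfun_nonneg {L : Type*} [MetricSpace L] [Fintype L] [Nonempty L] (m mV : ℝ) (a b : L) :
    0 ≤ wfun m mV a b := by
  unfold wfun
  have h1 := geomConst_pos (L := L) mV
  have h2 := geomConst_pos (L := L) m
  positivity

lemma wfun_sum_le {L : Type*} [MetricSpace L] [Fintype L] [Nonempty L] (m mV : ℝ) (b : L) :
    ∑ a : L, wfun m mV a b ≤ 2 := by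
  unfold wfun
  rw [Finset.sum_add_distrib, ← Finset.mul_sum, ← Finset.mul_sum]
  have key : ∀ μ : ℝ, (geomConst L μ)⁻¹ * (∑ a : L, Real.exp (-μ * dist a b)) ≤ 1 := by
    intro μ
    have h1 : ∑ a : L, Real.exp (-μ * dist a b) = ∑ a : L, Real.exp (-μ * dist b a) := by
      apply Finset.sum_congr rfl
      intro a _
      rw [_root_.dist_comm]
    rw [h1]
    have h2 := sum_exp_le_geomConst (L := L) μ b
    have h3 := geomConst_pos (L := L) μ
    rw [← inv_mul_cancel₀ (ne_of_gt h3)]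
    apply mul_le_mul_of_nonneg_left h2 (by positivity)
  have := key mV
  have := key m
  linarith

noncomputable def eW {L : Type*} [MetricSpace L] [Fintype L] (m mV : ℝ) {X : Finset L}
    (e : Sym2 {y // y ∈ X}) : ℝ :=
  Sym2.lift ⟨fun (a b : {y // y ∈ X}) => wfun m mV (a : L) (b : L),
    fun _ _ => wfun_comm m mV _ _⟩ e

lemma eW_nonneg {L : Type*} [MetricSpace L] [Fintype L] [Nonempty L] (m mV : ℝ) {X : Finset L}
    (e : Sym2 {y // y ∈ X}) : 0 ≤ eW m mV e := by
  induction e using Sym2.ind with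
  | _ a b => unfold eW; rw [Sym2.lift_mk]; exact wfun_nonneg m mV _ _

/-! ### Summation helpers -/

lemma sum_update_mul {ι κ : Type*} [Fintype ι] [Fintype κ] [DecidableEq ι]
    (j : ι) (F : (ι → κ) → ℝ) :
    ∑ z : (ι → κ) × κ, F (Function.update z.1 j z.2) = (Fintype.card κ) * ∑ y, F y := by
  let e : ((ι → κ) × κ) ≃ ((ι → κ) × κ) := {
    toFun := fun z => (Function.update z.1 j z.2, z.1 j)
    invFun := fun z => (Function.update z.1 j z.2, z.1 j)
    left_inv := by rintro ⟨y, u⟩; simp [Function.update_idem, Function.update_eq_self]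
    right_inv := by rintro ⟨y, u⟩; simp [Function.update_idem, Function.update_eq_self] }
  calc ∑ z : (ι → κ) × κ, F (Function.update z.1 j z.2)
      = ∑ z : (ι → κ) × κ, F ((e z).1) := rfl
    _ = ∑ z : (ι → κ) × κ, F z.1 := Equiv.sum_comp e (fun z : (ι → κ) × κ => F z.1)
    _ = (Fintype.card κ) * ∑ y, F y := by
        rw [Fintype.sum_prod_type]
        simp [Finset.sum_const, nsmul_eq_mul, mul_comm, Finset.mul_sum]

lemma exists_leaf {ι : Type*} [DecidableEq ι] (o : ι) (p : ι → ι)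
    (hac : ∀ i, ∃ k, p^[k] i = o) (A : Finset ι) (hA : A.Nonempty) (hoA : o ∉ A) :
    ∃ j ∈ A, ∀ i ∈ A, p i = j → i = j := by
  by_contra hno
  push_neg at hno
  have hsub : A ⊆ A.image p := by
    intro j hj
    obtain ⟨i, hi, hpi, _⟩ := hno j hj
    exact Finset.mem_image.2 ⟨i, hi, hpi⟩
  have heq : A = A.image p := Finset.eq_of_subset_of_card_le hsub (Finset.card_image_le)
  have pA : ∀ i ∈ A, p i ∈ A := by
    intro i hi
    rw [heq]
    exact Finset.mem_image_of_mem p hi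
  obtain ⟨j₀, hj₀⟩ := hA
  have hiter : ∀ k, p^[k] j₀ ∈ A := by
    intro k
    induction k with
    | zero => simpa using hj₀
    | succ k ih => rw [Function.iterate_succ_apply']; exact pA _ ih
  obtain ⟨k, hk⟩ := hac j₀
  exact hoA (hk ▸ hiter k)

/-- The peeling estimate: summing a rooted (acyclic) product of pair weights over all
assignments of points to indices. -/
lemma peel {ι L : Type*} [Fintype ι] [DecidableEq ι] [Fintype L] [Nonempty L]
    (w : L → L → ℝ) (hw0 : ∀ a b, 0 ≤ w a b) (hwsum : ∀ b : L, ∑ a, w a b ≤ 2)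
    (g : L → ℝ) (hg0 : ∀ u, 0 ≤ g u) {C : ℝ} (hgsum : ∑ u, g u ≤ C)
    (o : ι) (p : ι → ι) (hac : ∀ i, ∃ k, p^[k] i = o)
    (I : Finset ι) (ho : o ∈ I) :
    ∑ y : ι → L, g (y o) * ∏ i ∈ I.erase o, w (y i) (y (p i))
      ≤ C * 2 ^ (I.card - 1) * (Fintype.card L : ℝ) ^ (Fintype.card ι - I.card) := by
  have hC : (0:ℝ) ≤ C := le_trans (Finset.sum_nonneg fun u _ => hg0 u) hgsum
  have hLpos : (0:ℝ) < (Fintype.card L : ℝ) := by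
    exact_mod_cast Fintype.card_pos
  induction I using Finset.strongInduction with
  | _ I IH =>
    by_cases hI1 : I.card = 1
    · -- base case : I = {o}
      obtain ⟨a, ha⟩ := Finset.card_eq_one.1 hI1
      have hao : a = o := by
        have := ho; rw [ha, Finset.mem_singleton] at this; exact this.symm
      subst hao
      rw [ha]
      simp only [Finset.erase_singleton, Finset.prod_empty, mul_one, Finset.card_singleton]
      have key := sum_update_mul (κ := L) a (fun y => g (y a))
      have h1 : ∑ z : (ι → L) × L, g (Function.update z.1 a z.2 a) = ∑ z : (ι → L) × L, g z.2 := by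
        apply Finset.sum_congr rfl
        intro z _
        rw [Function.update_self]
      have h2 : ∑ z : (ι → L) × L, g z.2 = (Fintype.card L : ℝ) ^ (Fintype.card ι) * ∑ u, g u := by
        rw [Fintype.sum_prod_type]
        have : ∑ _x : ι → L, ∑ u, g u = (Fintype.card (ι → L) : ℝ) * ∑ u, g u := by
          rw [Finset.sum_const, nsmul_eq_mul]
          simp
        rw [this, Fintype.card_fun]
        push_cast
        rfl
      rw [h1, h2] at key
      have hcardpos : 1 ≤ Fintype.card ι := @Fintype.card_pos ι _ ⟨a⟩
      have : ∑ y : ι → L, g (y a)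
          = (Fintype.card L : ℝ) ^ (Fintype.card ι - 1) * ∑ u, g u := by
        have hpow : (Fintype.card L : ℝ) ^ (Fintype.card ι)
            = (Fintype.card L : ℝ) * (Fintype.card L : ℝ) ^ (Fintype.card ι - 1) := by
          rw [← pow_succ']
          congr 1
          omega
        apply mul_left_cancel₀ (ne_of_gt hLpos)
        rw [← key, hpow]
        ring
      rw [this]
      calc (Fintype.card L : ℝ) ^ (Fintype.card ι - 1) * ∑ u, g u
          ≤ (Fintype.card L : ℝ) ^ (Fintype.card ι - 1) * C := by
            apply mul_le_mul_of_nonneg_left hgsum (by positivity)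
        _ = C * 2 ^ (1 - 1) * (Fintype.card L : ℝ) ^ (Fintype.card ι - 1) := by
            simp [mul_comm]
    · -- inductive step
      have hk2 : 2 ≤ I.card := by
        have : 0 < I.card := Finset.card_pos.2 ⟨o, ho⟩
        omega
      set A := I.erase o with hA
      have hAcard : A.card = I.card - 1 := Finset.card_erase_of_mem ho
      have hAne : A.Nonempty := Finset.card_pos.1 (by omega)
      obtain ⟨j, hjA, hleaf⟩ := exists_leaf o p hac A hAne (Finset.notMem_erase o I)
      have hjo : j ≠ o := (Finset.mem_erase.1 hjA).1
      have hjI : j ∈ I := (Finset.mem_erase.1 hjA).2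
      have hpj : p j ≠ j := by
        intro hfix
        obtain ⟨k, hk⟩ := hac j
        have : ∀ k, p^[k] j = j := by
          intro k
          induction k with
          | zero => rfl
          | succ k ih => rw [Function.iterate_succ_apply', ih, hfix]
        exact hjo ((this k) ▸ hk)
      have hpij : ∀ i ∈ A.erase j, p i ≠ j := by
        intro i hi hpi
        exact (Finset.mem_erase.1 hi).1 (hleaf i (Finset.mem_erase.1 hi).2 hpi)
      set S : ℝ := ∑ y : ι → L, g (y o) * ∏ i ∈ A, w (y i) (y (p i)) with hS
      have key := sum_update_mul (κ := L) j
        (fun y => g (y o) * ∏ i ∈ A, w (y i) (y (p i)))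
      have hsplit : ∀ (y : ι → L) (u : L),
          g (Function.update y j u o) * ∏ i ∈ A, w (Function.update y j u i) (Function.update y j u (p i))
          = (g (y o) * ∏ i ∈ A.erase j, w (y i) (y (p i))) * w u (y (p j)) := by
        intro y u
        have h0 : Function.update y j u o = y o := Function.update_of_ne (Ne.symm hjo) u y
        have hprod : ∏ i ∈ A, w (Function.update y j u i) (Function.update y j u (p i))
            = w u (y (p j)) * ∏ i ∈ A.erase j, w (y i) (y (p i)) := by
          rw [← Finset.mul_prod_erase A _ hjA]
          congr 1
          · rw [Function.update_self, Function.update_of_ne hpj]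
          · apply Finset.prod_congr rfl
            intro i hi
            rw [Function.update_of_ne (Finset.mem_erase.1 hi).1,
                Function.update_of_ne (hpij i hi)]
        rw [h0, hprod]; ring
      have key2 : (Fintype.card L : ℝ) * S
          = ∑ y : ι → L, (g (y o) * ∏ i ∈ A.erase j, w (y i) (y (p i))) * (∑ u, w u (y (p j))) := by
        rw [← key]
        rw [Fintype.sum_prod_type]
        apply Finset.sum_congr rfl
        intro y _
        rw [Finset.mul_sum]
        apply Finset.sum_congr rfl
        intro u _
        exact hsplit y u
      have hrest0 : ∀ y : ι → L, 0 ≤ g (y o) * ∏ i ∈ A.erase j, w (y i) (y (p i)) := by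
        intro y
        exact mul_nonneg (hg0 _) (Finset.prod_nonneg fun i _ => hw0 _ _)
      have key3 : (Fintype.card L : ℝ) * S
          ≤ 2 * ∑ y : ι → L, g (y o) * ∏ i ∈ A.erase j, w (y i) (y (p i)) := by
        rw [key2, Finset.mul_sum]
        apply Finset.sum_le_sum
        intro y _
        rw [mul_comm (2:ℝ) _]
        exact mul_le_mul_of_nonneg_left (hwsum _) (hrest0 y)
      have hsubI : I.erase j ⊂ I := Finset.erase_ssubset hjI
      have hoIj : o ∈ I.erase j := Finset.mem_erase.2 ⟨Ne.symm hjo, ho⟩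
      have IHj := IH (I.erase j) hsubI hoIj
      have herase : (I.erase j).erase o = A.erase j := by
        rw [hA, Finset.erase_right_comm]
      rw [herase, Finset.card_erase_of_mem hjI] at IHj
      have hcardle : I.card ≤ Fintype.card ι := Finset.card_le_univ I
      have final : (Fintype.card L : ℝ) * S
          ≤ (Fintype.card L : ℝ) * (C * 2 ^ (I.card - 1) * (Fintype.card L : ℝ) ^ (Fintype.card ι - I.card)) := by
        calc (Fintype.card L : ℝ) * S
            ≤ 2 * ∑ y : ι → L, g (y o) * ∏ i ∈ A.erase j, w (y i) (y (p i)) := key3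
          _ ≤ 2 * (C * 2 ^ (I.card - 1 - 1) * (Fintype.card L : ℝ) ^ (Fintype.card ι - (I.card - 1))) := by
              apply mul_le_mul_of_nonneg_left IHj (by norm_num)
          _ = (Fintype.card L : ℝ) * (C * 2 ^ (I.card - 1) * (Fintype.card L : ℝ) ^ (Fintype.card ι - I.card)) := by
              obtain ⟨a, ha⟩ : ∃ a, I.card - 1 = a + 1 := ⟨I.card - 2, by omega⟩
              have ha2 : I.card - 1 - 1 = a := by omega
              have hb : Fintype.card ι - (I.card - 1) = (Fintype.card ι - I.card) + 1 := by omega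
              rw [ha2, hb] at *
              rw [ha]
              rw [pow_succ, pow_succ]
              ring
      exact le_of_mul_le_mul_left final hLpos

/-! ### Trees and parent maps -/

section tree
variable {V : Type*} {G : SimpleGraph V}

noncomputable def thePath (hG : G.IsTree) (a b : V) : G.Walk a b :=
  (hG.existsUnique_path a b).choose

lemma thePath_isPath (hG : G.IsTree) (a b : V) : (thePath hG a b).IsPath :=
  (hG.existsUnique_path a b).choose_spec.1

lemma thePath_unique (hG : G.IsTree) {a b : V} (q : G.Walk a b) (hq : q.IsPath) :
    q = thePath hG a b :=
  (hG.existsUnique_path a b).choose_spec.2 q hq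

noncomputable def tpar (hG : G.IsTree) (ρ : V) (v : V) : V := (thePath hG v ρ).getVert 1

lemma tpar_self (hG : G.IsTree) (ρ : V) : tpar hG ρ ρ = ρ := by
  have h : (Walk.nil : G.Walk ρ ρ) = thePath hG ρ ρ := thePath_unique hG _ Walk.IsPath.nil
  unfold tpar
  rw [← h]
  rfl

lemma tpar_eq_of_cons (hG : G.IsTree) (ρ : V) {v x : V} (h : G.Adj v x) (w' : G.Walk x ρ)
    (hc : thePath hG v ρ = Walk.cons h w') : tpar hG ρ v = x := by
  unfold tpar
  rw [hc, Walk.getVert_cons_succ, Walk.getVert_zero]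

lemma tpar_adj (hG : G.IsTree) (ρ : V) {v : V} (h : v ≠ ρ) : G.Adj v (tpar hG ρ v) := by
  obtain ⟨x, hx, w', hcons⟩ := Walk.exists_eq_cons_of_ne h (thePath hG v ρ)
  rw [tpar_eq_of_cons hG ρ hx w' hcons]
  exact hx

lemma tpar_length (hG : G.IsTree) (ρ : V) {v : V} (h : v ≠ ρ) :
    (thePath hG (tpar hG ρ v) ρ).length + 1 = (thePath hG v ρ).length := by
  obtain ⟨x, hx, w', hcons⟩ := Walk.exists_eq_cons_of_ne h (thePath hG v ρ)
  have htp : tpar hG ρ v = x := tpar_eq_of_cons hG ρ hx w' hcons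
  have hw' : w'.IsPath := by
    have := thePath_isPath hG v ρ
    rw [hcons] at this
    exact this.of_cons
  have hw'eq : w' = thePath hG x ρ := thePath_unique hG w' hw'
  subst htp
  rw [← hw'eq, hcons, Walk.length_cons]

lemma tpar_acyclic (hG : G.IsTree) (ρ : V) : ∀ v, ∃ k, (tpar hG ρ)^[k] v = ρ := by
  have main : ∀ n v, (thePath hG v ρ).length = n → ∃ k, (tpar hG ρ)^[k] v = ρ := by
    intro n
    induction n using Nat.strong_induction_on with
    | _ n IH =>
      intro v hv
      by_cases hvρ : v = ρ
      · exact ⟨0, hvρ⟩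
      · have hlen := tpar_length hG ρ hvρ
        have hlt : (thePath hG (tpar hG ρ v) ρ).length < n := by omega
        obtain ⟨k, hk⟩ := IH _ hlt (tpar hG ρ v) rfl
        exact ⟨k + 1, by rw [Function.iterate_succ_apply]; exact hk⟩
  exact fun v => main _ v rfl

lemma tpar_edge_surj (hG : G.IsTree) (ρ : V) {e : Sym2 V} (he : e ∈ G.edgeSet) :
    ∃ v, v ≠ ρ ∧ e = s(v, tpar hG ρ v) := by
  induction e using Sym2.ind with
  | _ a b =>
    rw [mem_edgeSet] at he
    have hab : a ≠ b := G.ne_of_adj he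
    by_cases hb : b = ρ
    · refine ⟨a, by rw [← hb]; exact hab, ?_⟩
      have he' : G.Adj a ρ := hb ▸ he
      have hpath : (Walk.cons he' Walk.nil : G.Walk a ρ).IsPath := by
        rw [Walk.cons_isPath_iff]
        refine ⟨Walk.IsPath.nil, ?_⟩
        rw [Walk.mem_support_nil_iff]
        rw [← hb]
        exact hab
      have h2 := thePath_unique hG _ hpath
      rw [tpar_eq_of_cons hG ρ he' Walk.nil h2.symm, hb]
    · by_cases ha : a = ρ
      · refine ⟨b, hb, ?_⟩
        have he' : G.Adj b ρ := ha ▸ he.symm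
        have hpath : (Walk.cons he' Walk.nil : G.Walk b ρ).IsPath := by
          rw [Walk.cons_isPath_iff]
          refine ⟨Walk.IsPath.nil, ?_⟩
          rw [Walk.mem_support_nil_iff]
          rw [← ha]
          exact Ne.symm hab
        have h2 := thePath_unique hG _ hpath
        rw [tpar_eq_of_cons hG ρ he' Walk.nil h2.symm, ha]
        exact Sym2.eq_swap
      · by_cases hmem : a ∈ (thePath hG b ρ).support
        · refine ⟨b, hb, ?_⟩
          have htak : ((thePath hG b ρ).takeUntil a hmem).IsPath :=
            (thePath_isPath hG b ρ).takeUntil hmem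
          have hsingle : (Walk.cons he.symm Walk.nil : G.Walk b a).IsPath := by
            rw [Walk.cons_isPath_iff]
            exact ⟨Walk.IsPath.nil, by simp [Ne.symm hab]⟩
          have hpeq : ((thePath hG b ρ).takeUntil a hmem) = Walk.cons he.symm Walk.nil := by
            have := hG.IsAcyclic.path_unique
              ⟨(thePath hG b ρ).takeUntil a hmem, htak⟩ ⟨Walk.cons he.symm Walk.nil, hsingle⟩
            exact congrArg Subtype.val this
          have hspec := (thePath hG b ρ).take_spec hmem
          rw [hpeq] at hspec
          rw [Walk.cons_append, Walk.nil_append] at hspec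
          have : tpar hG ρ b = a := tpar_eq_of_cons hG ρ he.symm _ hspec.symm
          rw [this]
          exact Sym2.eq_swap
        · refine ⟨a, ha, ?_⟩
          have hpath : (Walk.cons he (thePath hG b ρ)).IsPath := by
            rw [Walk.cons_isPath_iff]
            exact ⟨thePath_isPath hG b ρ, hmem⟩
          have := thePath_unique hG _ hpath
          rw [tpar_eq_of_cons hG ρ he _ this.symm]

lemma tpar_inj (hG : G.IsTree) (ρ : V) {v u : V} (hv : v ≠ ρ) (hu : u ≠ ρ)
    (h : s(v, tpar hG ρ v) = s(u, tpar hG ρ u)) : v = u := by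
  rw [Sym2.eq_iff] at h
  rcases h with ⟨h1, _⟩ | ⟨h1, h2⟩
  · exact h1
  · exfalso
    have lv := tpar_length hG ρ hv
    have lu := tpar_length hG ρ hu
    rw [← h1] at lu
    rw [h2] at lv
    omega

lemma tree_prod {V : Type*} [Fintype V] [DecidableEq V] {G : SimpleGraph V} (hG : G.IsTree) (ρ : V)
    (f : Sym2 V → ℝ) :
    ∏ v ∈ Finset.univ.erase ρ, f s(v, tpar hG ρ v) = ∏ e ∈ G.edgeFinset, f e := by
  apply Finset.prod_bij (fun v _ => s(v, tpar hG ρ v))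
  · intro v hv
    rw [mem_edgeFinset, mem_edgeSet]
    exact tpar_adj hG ρ (Finset.mem_erase.1 hv).1
  · intro v hv u hu h
    exact tpar_inj hG ρ (Finset.mem_erase.1 hv).1 (Finset.mem_erase.1 hu).1 h
  · intro e he
    obtain ⟨v, hv, hev⟩ := tpar_edge_surj hG ρ (mem_edgeFinset.1 he)
    exact ⟨v, Finset.mem_erase.2 ⟨hv, Finset.mem_univ v⟩, hev.symm⟩
  · intro v hv
    rfl

lemma tree_edgeFinset_eq {V : Type*} [Fintype V] [DecidableEq V] [DecidableEq (Sym2 V)]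
    {G : SimpleGraph V} (hG : G.IsTree) (ρ : V) :
    G.edgeFinset = (Finset.univ.erase ρ).image (fun v => s(v, tpar hG ρ v)) := by
  ext e
  constructor
  · intro he
    obtain ⟨v, hv, hev⟩ := tpar_edge_surj hG ρ (mem_edgeFinset.1 he)
    exact Finset.mem_image.2 ⟨v, Finset.mem_erase.2 ⟨hv, Finset.mem_univ v⟩, hev.symm⟩
  · intro he
    obtain ⟨v, hv, hev⟩ := Finset.mem_image.1 he
    rw [← hev, mem_edgeFinset, mem_edgeSet]
    exact tpar_adj hG ρ (Finset.mem_erase.1 hv).1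
end tree

/-! ### Counting and numeric helpers -/

lemma conj_iterate {α β : Type*} (σ : α ≃ β) (f : β → β) (k : ℕ) (x : α) :
    (fun i => σ.symm (f (σ i)))^[k] x = σ.symm (f^[k] (σ x)) := by
  induction k with
  | zero => simp
  | succ k ih =>
    rw [Function.iterate_succ_apply', Function.iterate_succ_apply', ih]
    simp

lemma sum_equiv_apply_zero {V : Type*} [Fintype V] [DecidableEq V] {n : ℕ}
    (hcard : Fintype.card V = n + 1) (f : V → ℝ) :
    ∑ σ : Fin (n+1) ≃ V, f (σ 0) = (Nat.factorial n) * ∑ v, f v := by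
  let e₀ : Fin (n+1) ≃ V := (Fintype.equivFinOfCardEq hcard).symm
  let E : (Fin (n+1) ≃ Fin (n+1)) ≃ (Fin (n+1) ≃ V) :=
    Equiv.equivCongr (Equiv.refl _) e₀
  have h1 : ∑ σ : Fin (n+1) ≃ V, f (σ 0) = ∑ π : Equiv.Perm (Fin (n+1)), f (e₀ (π 0)) := by
    rw [← Equiv.sum_comp E (fun σ => f (σ 0))]
    rfl
  have h2 : ∑ π : Equiv.Perm (Fin (n+1)), f (e₀ (π 0))
      = ∑ z : Fin (n+1) × Equiv.Perm (Fin n), f (e₀ z.1) := by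
    rw [← Equiv.sum_comp (Equiv.Perm.decomposeFin.symm)
      (fun π : Equiv.Perm (Fin (n+1)) => f (e₀ (π 0)))]
    apply Finset.sum_congr rfl
    rintro ⟨p, e⟩ _
    simp [Equiv.Perm.decomposeFin_symm_apply_zero]
  rw [h1, h2, Fintype.sum_prod_type]
  have h3 : ∀ p : Fin (n+1), ∑ _τ : Equiv.Perm (Fin n), f (e₀ p) = (Nat.factorial n) * f (e₀ p) := by
    intro p
    rw [Finset.sum_const, nsmul_eq_mul]
    congr 2
    simp [Fintype.card_perm]
  calc ∑ p : Fin (n+1), ∑ _τ : Equiv.Perm (Fin n), f (e₀ p)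
      = ∑ p : Fin (n+1), (Nat.factorial n) * f (e₀ p) := by
        exact Finset.sum_congr rfl fun p _ => h3 p
    _ = (Nat.factorial n) * ∑ p : Fin (n+1), f (e₀ p) := by rw [Finset.mul_sum]
    _ = (Nat.factorial n) * ∑ v, f v := by rw [Equiv.sum_comp e₀ f]

lemma pow_le_factorial_mul : ∀ q : ℕ, 1 ≤ q → ((q:ℝ))^(q-1) ≤ (Nat.factorial (q-1) : ℝ) * 4^q := by
  intro q
  induction q with
  | zero => intro h; omega
  | succ q ih =>
    intro _
    by_cases hq : q = 0
    · subst hq; norm_num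
    · have hq1 : 1 ≤ q := by omega
      have IH := ih hq1
      have hqR : (0:ℝ) < q := by exact_mod_cast Nat.pos_of_ne_zero hq
      have key : ((q+1:ℕ):ℝ)^q ≤ 3 * (q:ℝ)^q := by
        have h1 : ((q+1:ℕ):ℝ) = (q:ℝ) * (1 + 1/q) := by
          field_simp
          exact Nat.cast_succ q
        rw [h1, mul_pow]
        have h2 : (1 + 1/(q:ℝ))^q ≤ 3 := by
          have h3 : (1 + 1/(q:ℝ)) ≤ Real.exp (1/q) := by
            have := Real.add_one_le_exp (1/(q:ℝ))
            linarith
          have h4 : (1 + 1/(q:ℝ))^q ≤ (Real.exp (1/q))^q := by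
            apply pow_le_pow_left₀ (by positivity) h3
          have h5 : (Real.exp (1/(q:ℝ)))^q = Real.exp 1 := by
            rw [← Real.exp_nat_mul]
            congr 1
            field_simp
          rw [h5] at h4
          have h6 : Real.exp 1 ≤ 3 := by
            have := Real.exp_one_lt_d9
            linarith
          linarith
        calc (q:ℝ)^q * (1 + 1/(q:ℝ))^q ≤ (q:ℝ)^q * 3 := by
              apply mul_le_mul_of_nonneg_left h2 (by positivity)
          _ = 3 * (q:ℝ)^q := by ring
      have hqq : (q:ℝ)^q = (q:ℝ)^(q-1) * q := by
        rw [← pow_succ]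
        congr 1
        omega
      have hfac : (Nat.factorial q : ℝ) = q * (Nat.factorial (q-1) : ℝ) := by
        rw [← Nat.cast_mul]
        congr 1
        rw [← Nat.mul_factorial_pred hq]
      have step1 : ((q+1:ℕ):ℝ)^q ≤ 3 * ((q:ℝ)^(q-1) * q) := by rw [← hqq]; exact key
      have step2 : (q:ℝ)^(q-1) * q ≤ ((Nat.factorial (q-1) : ℝ) * 4^q) * q := by
        apply mul_le_mul_of_nonneg_right IH (le_of_lt hqR)
      have hch : ((q+1:ℕ):ℝ)^q ≤ 3 * (((Nat.factorial (q-1) : ℝ) * 4^q) * q) := by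
        calc ((q+1:ℕ):ℝ)^q ≤ 3 * ((q:ℝ)^(q-1) * q) := step1
          _ ≤ 3 * (((Nat.factorial (q-1) : ℝ) * 4^q) * q) := by
              apply mul_le_mul_of_nonneg_left step2 (by norm_num)
      have hgoal : (3:ℝ) * (((Nat.factorial (q-1) : ℝ) * 4^q) * q) ≤ (Nat.factorial q : ℝ) * 4^(q+1) := by
        rw [hfac, pow_succ]
        have hfn : (0:ℝ) ≤ (Nat.factorial (q-1) : ℝ) := by positivity
        nlinarith [pow_pos (show (0:ℝ) < 4 by norm_num) q]
      have gfin := le_trans hch hgoal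
      simpa using gfin

lemma card_fixzero_le (q : ℕ) (np : Fin q) :
    ((Finset.univ.filter (fun p : Fin q → Fin q => p np = np)).card : ℝ) ≤ (q:ℝ)^(q-1) := by
  have hinj : Set.InjOn (fun p : Fin q → Fin q => (fun i : {i : Fin q // i ≠ np} => p i))
      ((Finset.univ.filter (fun p : Fin q → Fin q => p np = np)) : Set (Fin q → Fin q)) := by
    intro p₁ h₁ p₂ h₂ heq
    simp only [Finset.coe_filter, Set.mem_setOf_eq] at h₁ h₂
    funext i
    by_cases hi : i = np
    · rw [hi, h₁.2, h₂.2]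
    · exact congrFun heq ⟨i, hi⟩
  have hcard := Finset.card_le_card_of_injOn _ (fun p _ => Finset.mem_univ _) hinj
  have hsub : Fintype.card {i : Fin q // i ≠ np} = q - 1 := by
    have := Fintype.card_subtype_compl (fun i : Fin q => i = np)
    simp only [Fintype.card_subtype_eq, Fintype.card_fin] at this
    convert this using 2
  have hcc : (Finset.univ : Finset ({i : Fin q // i ≠ np} → Fin q)).card = q^(q-1) := by
    rw [Finset.card_univ, Fintype.card_fun, hsub, Fintype.card_fin]
  rw [hcc] at hcard
  exact_mod_cast hcard

lemma geom_sum_bound (n : ℕ) : ∑ q ∈ Finset.Icc 1 n, ((2:ℝ)/3)^q ≤ 2 := by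
  have hins : Finset.range (n+1) = insert 0 (Finset.Icc 1 n) := by
    ext q
    simp only [Finset.mem_range, Finset.mem_insert, Finset.mem_Icc]
    omega
  have h0 : (0:ℕ) ∉ Finset.Icc 1 n := by simp
  have hsum : ∑ q ∈ Finset.range (n+1), ((2:ℝ)/3)^q = 1 + ∑ q ∈ Finset.Icc 1 n, ((2:ℝ)/3)^q := by
    rw [hins, Finset.sum_insert h0]
    norm_num
  have hle : ∑ q ∈ Finset.range (n+1), ((2:ℝ)/3)^q ≤ 3 := by
    rw [geom_sum_eq (by norm_num)]
    have hp : (0:ℝ) ≤ (2/3:ℝ)^(n+1) := by positivity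
    rw [div_le_iff_of_neg (by norm_num : ((2:ℝ)/3 - 1) < 0)]
    linarith
  linarith

/-! ### Step A : summing over subforests -/

lemma stepA {L : Type*} [MetricSpace L] [Fintype L] [Nonempty L]
    (m mV tm : ℝ) (x : L) (X : Finset L) (T : SimpleGraph {y // y ∈ X}) :
    ∑ F ∈ T.edgeFinset.powerset,
        ((12 : ℝ) ^ X.card)⁻¹ *
          ((geomConst L mV) ^ F.card)⁻¹ *
          ((geomConst L m) ^ (T.edgeFinset.card - F.card))⁻¹ *
          Real.exp (-mV * edgeLength F - m * edgeLength (T.edgeFinset \ F)) *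
          Real.exp (-tm * ⨅ y : {y // y ∈ X}, dist x (y : L))
      = ((12 : ℝ) ^ X.card)⁻¹ * Real.exp (-tm * ⨅ y : {y // y ∈ X}, dist x (y : L)) *
          ∏ e ∈ T.edgeFinset, eW m mV e := by
  classical
  set ℓ : Sym2 {y // y ∈ X} → ℝ := fun e => Sym2.lift ⟨fun (a b : {y // y ∈ X}) => dist (a : L) (b : L),
    fun _ _ => dist_comm _ _⟩ e with hℓ
  set A : Sym2 {y // y ∈ X} → ℝ := fun e => (geomConst L mV)⁻¹ * Real.exp (-mV * ℓ e) with hA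
  set B : Sym2 {y // y ∈ X} → ℝ := fun e => (geomConst L m)⁻¹ * Real.exp (-m * ℓ e) with hB
  have hterm : ∀ F ∈ T.edgeFinset.powerset,
      ((12 : ℝ) ^ X.card)⁻¹ *
          ((geomConst L mV) ^ F.card)⁻¹ *
          ((geomConst L m) ^ (T.edgeFinset.card - F.card))⁻¹ *
          Real.exp (-mV * edgeLength F - m * edgeLength (T.edgeFinset \ F)) *
          Real.exp (-tm * ⨅ y : {y // y ∈ X}, dist x (y : L))
        = (((12 : ℝ) ^ X.card)⁻¹ * Real.exp (-tm * ⨅ y : {y // y ∈ X}, dist x (y : L))) *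
          ((∏ e ∈ F, A e) * ∏ e ∈ T.edgeFinset \ F, B e) := by
    intro F hF
    have hFsub : F ⊆ T.edgeFinset := Finset.mem_powerset.1 hF
    have hcard : (T.edgeFinset \ F).card = T.edgeFinset.card - F.card :=
      Finset.card_sdiff_of_subset hFsub
    have hexp : Real.exp (-mV * edgeLength F - m * edgeLength (T.edgeFinset \ F))
        = (∏ e ∈ F, Real.exp (-mV * ℓ e)) * ∏ e ∈ T.edgeFinset \ F, Real.exp (-m * ℓ e) := by
      rw [sub_eq_add_neg, Real.exp_add]
      congr 1
      · rw [← Real.exp_sum]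
        congr 1
        unfold edgeLength
        rw [Finset.mul_sum]
      · rw [← Real.exp_sum]
        congr 1
        unfold edgeLength
        rw [← neg_mul, Finset.mul_sum]
    have hprodA : (∏ e ∈ F, A e)
        = ((geomConst L mV) ^ F.card)⁻¹ * ∏ e ∈ F, Real.exp (-mV * ℓ e) := by
      rw [hA, Finset.prod_mul_distrib, Finset.prod_const, inv_pow]
    have hprodB : (∏ e ∈ T.edgeFinset \ F, B e)
        = ((geomConst L m) ^ (T.edgeFinset.card - F.card))⁻¹ *
            ∏ e ∈ T.edgeFinset \ F, Real.exp (-m * ℓ e) := by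
      rw [hB, Finset.prod_mul_distrib, Finset.prod_const, inv_pow, hcard]
    rw [hexp, hprodA, hprodB]
    ring
  rw [Finset.sum_congr rfl hterm, ← Finset.mul_sum]
  congr 1
  rw [← Finset.prod_add A B T.edgeFinset]
  apply Finset.prod_congr rfl
  intro e _
  induction e using Sym2.ind with
  | _ a b =>
    simp only [hA, hB, hℓ, Sym2.lift_mk]
    unfold eW wfun
    rw [Sym2.lift_mk]


lemma perq {L : Type*} [MetricSpace L] [Fintype L] [Nonempty L]
    (m mV tm : ℝ) (x : L) (n' : ℕ) :
    ∑ X ∈ ((Finset.univ : Finset L).powerset.filter Finset.Nonempty).filter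
        (fun X => X.card = n' + 1),
      ∑ T : {T : SimpleGraph {y // y ∈ X} // T.IsTree},
        ∑ F ∈ (T : SimpleGraph {y // y ∈ X}).edgeFinset.powerset,
          ((12 : ℝ) ^ X.card)⁻¹ *
            ((geomConst L mV) ^ F.card)⁻¹ *
            ((geomConst L m) ^
              ((T : SimpleGraph {y // y ∈ X}).edgeFinset.card - F.card))⁻¹ *
            Real.exp (-mV * edgeLength F -
              m * edgeLength ((T : SimpleGraph {y // y ∈ X}).edgeFinset \ F)) *
            Real.exp (-tm * ⨅ y : {y // y ∈ X}, dist x (y : L))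
      ≤ (1/2) * ((2:ℝ)/3)^(n'+1) * geomConst L tm := by
  classical
  -- weight facts
  have hw0 : ∀ a b : L, 0 ≤ wfun m mV a b := wfun_nonneg m mV
  have hwsum : ∀ b : L, ∑ a : L, wfun m mV a b ≤ 2 := wfun_sum_le m mV
  have hg0 : ∀ u : L, 0 ≤ Real.exp (-tm * dist x u) := fun u => (Real.exp_pos _).le
  have hgsum : ∑ u : L, Real.exp (-tm * dist x u) ≤ geomConst L tm :=
    sum_exp_le_geomConst tm x
  have hct0 : (0:ℝ) ≤ geomConst L tm := (geomConst_pos tm).le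
  have h12pos : (0:ℝ) < ((12:ℝ)^(n'+1))⁻¹ := by positivity
  have hfacpos : (0:ℝ) < (Nat.factorial n' : ℝ) := by
    exact_mod_cast Nat.factorial_pos n'
  -- global objects
  set H : (Fin (n'+1) → L) × (Fin (n'+1) → Fin (n'+1)) → ℝ :=
    fun z => ((12:ℝ)^(n'+1))⁻¹ * Real.exp (-tm * dist x (z.1 0)) *
      ∏ i ∈ Finset.univ.erase (0 : Fin (n'+1)), wfun m mV (z.1 i) (z.1 (z.2 i)) with hH
  have hH0 : ∀ z, 0 ≤ H z := by
    intro z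
    rw [hH]
    have := Real.exp_pos (-tm * dist x (z.1 0))
    have hprod : (0:ℝ) ≤ ∏ i ∈ Finset.univ.erase (0 : Fin (n'+1)), wfun m mV (z.1 i) (z.1 (z.2 i)) :=
      Finset.prod_nonneg fun i _ => hw0 _ _
    positivity
  set Pset : Finset (Fin (n'+1) → Fin (n'+1)) :=
    Finset.univ.filter (fun p => p 0 = 0 ∧ ∀ i, ∃ k, p^[k] i = 0) with hPset
  set MM : (X : Finset L) → Finset ((Fin (n'+1) → L) × (Fin (n'+1) → Fin (n'+1))) :=
    fun X => Finset.univ.biUnion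
      (fun T : {T : SimpleGraph {y // y ∈ X} // T.IsTree} =>
        Finset.univ.image (fun σ : Fin (n'+1) ≃ {y // y ∈ X} =>
          ((fun i => ((σ i : {y // y ∈ X}) : L)),
           fun i => σ.symm (tpar T.2 (σ 0) (σ i))))) with hMM
  -- membership facts for MM
  have hMMmem : ∀ (X : Finset L) (z : (Fin (n'+1) → L) × (Fin (n'+1) → Fin (n'+1))),
      z ∈ MM X → (z.2 ∈ Pset ∧ Finset.univ.image z.1 = X) := by
    intro X z hz
    rw [hMM] at hz
    obtain ⟨T, _, hz⟩ := Finset.mem_biUnion.1 hz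
    obtain ⟨σ, _, hσ⟩ := Finset.mem_image.1 hz
    subst hσ
    constructor
    · rw [hPset, Finset.mem_filter]
      refine ⟨Finset.mem_univ _, ?_, ?_⟩
      · show σ.symm (tpar T.2 (σ 0) (σ 0)) = 0
        rw [tpar_self T.2 (σ 0), Equiv.symm_apply_apply]
      · intro i
        obtain ⟨k, hk⟩ := tpar_acyclic T.2 (σ 0) (σ i)
        refine ⟨k, ?_⟩
        show (fun j => σ.symm (tpar T.2 (σ 0) (σ j)))^[k] i = 0
        rw [conj_iterate σ (tpar T.2 (σ 0)) k i, hk, Equiv.symm_apply_apply]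
    · ext a
      simp only [Finset.mem_image, Finset.mem_univ, true_and]
      constructor
      · rintro ⟨i, rfl⟩
        exact (σ i).2
      · intro ha
        exact ⟨σ.symm ⟨a, ha⟩, by rw [Equiv.apply_symm_apply]⟩
  -- the per-X estimate
  have keyX : ∀ X ∈ ((Finset.univ : Finset L).powerset.filter Finset.Nonempty).filter
        (fun X => X.card = n' + 1),
      (∑ T : {T : SimpleGraph {y // y ∈ X} // T.IsTree},
        ∑ F ∈ (T : SimpleGraph {y // y ∈ X}).edgeFinset.powerset,
          ((12 : ℝ) ^ X.card)⁻¹ *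
            ((geomConst L mV) ^ F.card)⁻¹ *
            ((geomConst L m) ^
              ((T : SimpleGraph {y // y ∈ X}).edgeFinset.card - F.card))⁻¹ *
            Real.exp (-mV * edgeLength F -
              m * edgeLength ((T : SimpleGraph {y // y ∈ X}).edgeFinset \ F)) *
            Real.exp (-tm * ⨅ y : {y // y ∈ X}, dist x (y : L)))
        ≤ (Nat.factorial n' : ℝ)⁻¹ * ∑ z ∈ MM X, H z := by
    intro X hX
    have hXq : X.card = n' + 1 := (Finset.mem_filter.1 hX).2
    have hXne : X.Nonempty := (Finset.mem_filter.1 (Finset.mem_filter.1 hX).1).2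
    haveI hNV : Nonempty {y // y ∈ X} := ⟨⟨hXne.choose, hXne.choose_spec⟩⟩
    have hcV : Fintype.card {y // y ∈ X} = n' + 1 := by
      rw [Fintype.card_coe]; exact hXq
    set Φ : (T : {T : SimpleGraph {y // y ∈ X} // T.IsTree}) →
        (Fin (n'+1) ≃ {y // y ∈ X}) → (Fin (n'+1) → L) × (Fin (n'+1) → Fin (n'+1)) :=
      fun T σ => ((fun i => ((σ i : {y // y ∈ X}) : L)),
        fun i => σ.symm (tpar T.2 (σ 0) (σ i))) with hΦ
    have hMMX : MM X = Finset.univ.biUnion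
        (fun T : {T : SimpleGraph {y // y ∈ X} // T.IsTree} =>
          Finset.univ.image (Φ T)) := rfl
    -- injectivity of Φ T in σ
    have hΦfst : ∀ (T) (σ σ' : Fin (n'+1) ≃ {y // y ∈ X}),
        Φ T σ = Φ T σ' → σ = σ' := by
      intro T σ σ' h
      have h1 := congrArg Prod.fst h
      apply Equiv.ext
      intro i
      apply Subtype.ext
      exact congrFun h1 i
    -- the σ-sum identity
    have hinf : Real.exp (-tm * ⨅ y : {y // y ∈ X}, dist x (y : L))
        ≤ ∑ v : {y // y ∈ X}, Real.exp (-tm * dist x (v : L)) := by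
      obtain ⟨v₀, hv₀⟩ := exists_eq_ciInf_of_finite
        (f := fun y : {y // y ∈ X} => dist x (y : L))
      rw [← hv₀]
      exact Finset.single_le_sum
        (f := fun v : {y // y ∈ X} => Real.exp (-tm * dist x (v : L)))
        (fun v _ => (Real.exp_pos _).le) (Finset.mem_univ v₀)
    have keyT : ∀ T : {T : SimpleGraph {y // y ∈ X} // T.IsTree},
        (∑ F ∈ (T : SimpleGraph {y // y ∈ X}).edgeFinset.powerset,
          ((12 : ℝ) ^ X.card)⁻¹ *
            ((geomConst L mV) ^ F.card)⁻¹ *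
            ((geomConst L m) ^
              ((T : SimpleGraph {y // y ∈ X}).edgeFinset.card - F.card))⁻¹ *
            Real.exp (-mV * edgeLength F -
              m * edgeLength ((T : SimpleGraph {y // y ∈ X}).edgeFinset \ F)) *
            Real.exp (-tm * ⨅ y : {y // y ∈ X}, dist x (y : L)))
          ≤ (Nat.factorial n' : ℝ)⁻¹ * ∑ σ : Fin (n'+1) ≃ {y // y ∈ X}, H (Φ T σ) := by
      intro T
      have hprod0 : (0:ℝ) ≤ ∏ e ∈ (T : SimpleGraph {y // y ∈ X}).edgeFinset, eW m mV e :=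
        Finset.prod_nonneg fun e _ => eW_nonneg m mV e
      have hprodσ : ∀ σ : Fin (n'+1) ≃ {y // y ∈ X},
          ∏ i ∈ Finset.univ.erase (0 : Fin (n'+1)),
            wfun m mV ((σ i : {y // y ∈ X}) : L) ((tpar T.2 (σ 0) (σ i) : {y // y ∈ X}) : L)
          = ∏ e ∈ (T : SimpleGraph {y // y ∈ X}).edgeFinset, eW m mV e := by
        intro σ
        rw [← tree_prod T.2 (σ 0) (eW m mV)]
        apply Finset.prod_bij (fun i _ => σ i)
        · intro i hi
          refine Finset.mem_erase.2 ?_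
          refine ⟨fun h => (Finset.mem_erase.1 hi).1 (σ.injective h), Finset.mem_univ _⟩
        · intro i hi i' hi' h
          exact σ.injective h
        · intro v hv
          refine ⟨σ.symm v, ?_, by rw [Equiv.apply_symm_apply]⟩
          refine Finset.mem_erase.2 ?_
          refine ⟨fun h => (Finset.mem_erase.1 hv).1 ?_, Finset.mem_univ _⟩
          rw [← Equiv.apply_symm_apply σ v, h]
        · intro i hi
          unfold eW
          rw [Sym2.lift_mk]
      have hHΦ : ∀ σ : Fin (n'+1) ≃ {y // y ∈ X},
          H (Φ T σ) = (((12:ℝ)^(n'+1))⁻¹ *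
            ∏ e ∈ (T : SimpleGraph {y // y ∈ X}).edgeFinset, eW m mV e) *
            Real.exp (-tm * dist x ((σ 0 : {y // y ∈ X}) : L)) := by
        intro σ
        rw [hH, hΦ]
        simp only [Equiv.apply_symm_apply]
        rw [hprodσ σ]
        ring
      have hsumσ : ∑ σ : Fin (n'+1) ≃ {y // y ∈ X}, H (Φ T σ)
          = (Nat.factorial n' : ℝ) * ((((12:ℝ)^(n'+1))⁻¹ *
              ∏ e ∈ (T : SimpleGraph {y // y ∈ X}).edgeFinset, eW m mV e) *
              ∑ v : {y // y ∈ X}, Real.exp (-tm * dist x (v : L))) := by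
        rw [Finset.sum_congr rfl (fun σ _ => hHΦ σ), ← Finset.mul_sum]
        rw [sum_equiv_apply_zero hcV (fun v : {y // y ∈ X} => Real.exp (-tm * dist x (v : L)))]
        ring
      rw [stepA m mV tm x X (T : SimpleGraph {y // y ∈ X}), hXq]
      rw [hsumσ, ← mul_assoc, inv_mul_cancel₀ (ne_of_gt hfacpos), one_mul]
      calc ((12:ℝ)^(n'+1))⁻¹ * Real.exp (-tm * ⨅ y : {y // y ∈ X}, dist x (y : L)) *
            ∏ e ∈ (T : SimpleGraph {y // y ∈ X}).edgeFinset, eW m mV e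
          ≤ ((12:ℝ)^(n'+1))⁻¹ * (∑ v : {y // y ∈ X}, Real.exp (-tm * dist x (v : L))) *
            ∏ e ∈ (T : SimpleGraph {y // y ∈ X}).edgeFinset, eW m mV e := by
            apply mul_le_mul_of_nonneg_right _ hprod0
            exact mul_le_mul_of_nonneg_left hinf h12pos.le
        _ = ((12:ℝ)^(n'+1))⁻¹ *
              (∏ e ∈ (T : SimpleGraph {y // y ∈ X}).edgeFinset, eW m mV e) *
              ∑ v : {y // y ∈ X}, Real.exp (-tm * dist x (v : L)) := by ring
        _ = (((12:ℝ)^(n'+1))⁻¹ *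
              ∏ e ∈ (T : SimpleGraph {y // y ∈ X}).edgeFinset, eW m mV e) *
              ∑ v : {y // y ∈ X}, Real.exp (-tm * dist x (v : L)) := by ring
    -- sum keyT over T, convert to sums over images and the biUnion
    have hdisjT : ((Finset.univ : Finset {T : SimpleGraph {y // y ∈ X} // T.IsTree}) : Set _).PairwiseDisjoint
        (fun T => Finset.univ.image (Φ T)) := by
      intro T _ T' _ hTT'
      rw [Function.onFun, Finset.disjoint_left]
      intro z hz hz'
      obtain ⟨σ, _, hσ⟩ := Finset.mem_image.1 hz
      obtain ⟨σ', _, hσ'⟩ := Finset.mem_image.1 hz'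
      have hfst : ∀ i, ((σ i : {y // y ∈ X}) : L) = ((σ' i : {y // y ∈ X}) : L) := by
        intro i
        have h1 := congrArg Prod.fst hσ
        have h2 := congrArg Prod.fst hσ'
        rw [← h2] at h1
        exact congrFun h1 i
      have hσσ' : σ = σ' := by
        apply Equiv.ext
        intro i
        exact Subtype.ext (hfst i)
      subst hσσ'
      have hsnd : ∀ i, σ.symm (tpar T.2 (σ 0) (σ i)) = σ.symm (tpar T'.2 (σ 0) (σ i)) := by
        intro i
        have h1 := congrArg Prod.snd hσ
        have h2 := congrArg Prod.snd hσ'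
        rw [← h2] at h1
        exact congrFun h1 i
      have htpar : ∀ v : {y // y ∈ X}, tpar T.2 (σ 0) v = tpar T'.2 (σ 0) v := by
        intro v
        have := hsnd (σ.symm v)
        rw [Equiv.apply_symm_apply] at this
        exact σ.symm.injective this
      have hedge : (T : SimpleGraph {y // y ∈ X}).edgeFinset
          = (T' : SimpleGraph {y // y ∈ X}).edgeFinset := by
        rw [tree_edgeFinset_eq T.2 (σ 0), tree_edgeFinset_eq T'.2 (σ 0)]
        have hfeq : (fun v : {y // y ∈ X} => s(v, tpar T.2 (σ 0) v))
            = (fun v : {y // y ∈ X} => s(v, tpar T'.2 (σ 0) v)) :=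
          funext (fun v => by rw [htpar v])
        rw [hfeq]
      exact hTT' (Subtype.ext (SimpleGraph.edgeFinset_inj.1 hedge))
    calc (∑ T : {T : SimpleGraph {y // y ∈ X} // T.IsTree},
        ∑ F ∈ (T : SimpleGraph {y // y ∈ X}).edgeFinset.powerset,
          ((12 : ℝ) ^ X.card)⁻¹ *
            ((geomConst L mV) ^ F.card)⁻¹ *
            ((geomConst L m) ^
              ((T : SimpleGraph {y // y ∈ X}).edgeFinset.card - F.card))⁻¹ *
            Real.exp (-mV * edgeLength F -
              m * edgeLength ((T : SimpleGraph {y // y ∈ X}).edgeFinset \ F)) *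
            Real.exp (-tm * ⨅ y : {y // y ∈ X}, dist x (y : L)))
        ≤ ∑ T : {T : SimpleGraph {y // y ∈ X} // T.IsTree},
            (Nat.factorial n' : ℝ)⁻¹ * ∑ σ : Fin (n'+1) ≃ {y // y ∈ X}, H (Φ T σ) :=
          Finset.sum_le_sum (fun T _ => keyT T)
      _ = (Nat.factorial n' : ℝ)⁻¹ * ∑ T : {T : SimpleGraph {y // y ∈ X} // T.IsTree},
            ∑ σ : Fin (n'+1) ≃ {y // y ∈ X}, H (Φ T σ) := by rw [← Finset.mul_sum]
      _ = (Nat.factorial n' : ℝ)⁻¹ * ∑ T : {T : SimpleGraph {y // y ∈ X} // T.IsTree},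
            ∑ z ∈ Finset.univ.image (Φ T), H z := by
          congr 1
          apply Finset.sum_congr rfl
          intro T _
          rw [Finset.sum_image]
          intro σ _ σ' _ h
          exact hΦfst T σ σ' h
      _ = (Nat.factorial n' : ℝ)⁻¹ * ∑ z ∈ MM X, H z := by
          rw [hMMX, Finset.sum_biUnion hdisjT]
  -- now sum over X
  have hdisjX : ((((Finset.univ : Finset L).powerset.filter Finset.Nonempty).filter
      (fun X => X.card = n' + 1)) : Set (Finset L)).PairwiseDisjoint MM := by
    intro X hX X' hX' hne
    rw [Function.onFun, Finset.disjoint_left]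
    intro z hz hz'
    apply hne
    rw [← (hMMmem X z hz).2, ← (hMMmem X' z hz').2]
  have hsubD : (((Finset.univ : Finset L).powerset.filter Finset.Nonempty).filter
      (fun X => X.card = n' + 1)).biUnion MM ⊆ Finset.univ ×ˢ Pset := by
    intro z hz
    obtain ⟨X, hX, hzX⟩ := Finset.mem_biUnion.1 hz
    rw [Finset.mem_product]
    exact ⟨Finset.mem_univ _, (hMMmem X z hzX).1⟩
  -- the p-sum estimate
  have hpsum : ∀ p ∈ Pset, ∑ y : Fin (n'+1) → L, H (y, p)
      ≤ ((12:ℝ)^(n'+1))⁻¹ * (geomConst L tm * 2^n') := by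
    intro p hp
    have hp2 := (Finset.mem_filter.1 hp).2
    have hpeel := peel (wfun m mV) hw0 hwsum
      (fun u => Real.exp (-tm * dist x u)) hg0 hgsum
      (0 : Fin (n'+1)) p hp2.2 Finset.univ (Finset.mem_univ 0)
    have hcard1 : (Finset.univ : Finset (Fin (n'+1))).card = n' + 1 := by simp
    rw [hcard1, Fintype.card_fin, Nat.sub_self, pow_zero, mul_one, Nat.add_sub_cancel] at hpeel
    have hHsum : ∑ y : Fin (n'+1) → L, H (y, p)
        = ((12:ℝ)^(n'+1))⁻¹ * ∑ y : Fin (n'+1) → L,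
            Real.exp (-tm * dist x (y 0)) *
              ∏ i ∈ Finset.univ.erase (0 : Fin (n'+1)), wfun m mV (y i) (y (p i)) := by
      rw [hH, Finset.mul_sum]
      apply Finset.sum_congr rfl
      intro y _
      ring
    rw [hHsum]
    exact mul_le_mul_of_nonneg_left hpeel h12pos.le
  have hPcard : ((Pset.card : ℕ) : ℝ) ≤ ((n'+1 : ℕ):ℝ)^n' := by
    have hsub : Pset ⊆ Finset.univ.filter (fun p : Fin (n'+1) → Fin (n'+1) => p 0 = 0) := by
      intro p hp
      rw [Finset.mem_filter]
      exact ⟨Finset.mem_univ _, (Finset.mem_filter.1 hp).2.1⟩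
    have h1 : (Pset.card : ℝ) ≤ ((Finset.univ.filter
        (fun p : Fin (n'+1) → Fin (n'+1) => p 0 = 0)).card : ℝ) := by
      exact_mod_cast Finset.card_le_card hsub
    have h2 := card_fixzero_le (n'+1) 0
    rw [Nat.add_sub_cancel] at h2
    exact le_trans h1 (by exact_mod_cast h2)
  have hDsum : ∑ z ∈ Finset.univ ×ˢ Pset, H z
      ≤ (Pset.card : ℝ) * (((12:ℝ)^(n'+1))⁻¹ * (geomConst L tm * 2^n')) := by
    rw [Finset.sum_product_right]
    calc ∑ p ∈ Pset, ∑ y : Fin (n'+1) → L, H (y, p)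
        ≤ ∑ p ∈ Pset, ((12:ℝ)^(n'+1))⁻¹ * (geomConst L tm * 2^n') :=
          Finset.sum_le_sum hpsum
      _ = (Pset.card : ℝ) * (((12:ℝ)^(n'+1))⁻¹ * (geomConst L tm * 2^n')) := by
          rw [Finset.sum_const, nsmul_eq_mul]
  -- numeric endgame
  have hfac4 : ((n'+1 : ℕ):ℝ)^n' ≤ (Nat.factorial n' : ℝ) * 4^(n'+1) := by
    have := pow_le_factorial_mul (n'+1) (by omega)
    rw [Nat.add_sub_cancel] at this
    exact this
  have key4 : (4:ℝ)^(n'+1) * ((12:ℝ)^(n'+1))⁻¹ * (2:ℝ)^n' = (1/2) * ((2:ℝ)/3)^(n'+1) := by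
    have h1 : ((2:ℝ)/3) = 4 * 2 / 12 := by norm_num
    rw [h1, div_pow, mul_pow, pow_succ (2:ℝ) n']
    have h12 : ((12:ℝ)^(n'+1)) ≠ 0 := by positivity
    field_simp
  calc ∑ X ∈ ((Finset.univ : Finset L).powerset.filter Finset.Nonempty).filter
        (fun X => X.card = n' + 1),
      ∑ T : {T : SimpleGraph {y // y ∈ X} // T.IsTree},
        ∑ F ∈ (T : SimpleGraph {y // y ∈ X}).edgeFinset.powerset,
          ((12 : ℝ) ^ X.card)⁻¹ *
            ((geomConst L mV) ^ F.card)⁻¹ *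
            ((geomConst L m) ^
              ((T : SimpleGraph {y // y ∈ X}).edgeFinset.card - F.card))⁻¹ *
            Real.exp (-mV * edgeLength F -
              m * edgeLength ((T : SimpleGraph {y // y ∈ X}).edgeFinset \ F)) *
            Real.exp (-tm * ⨅ y : {y // y ∈ X}, dist x (y : L))
      ≤ ∑ X ∈ ((Finset.univ : Finset L).powerset.filter Finset.Nonempty).filter
          (fun X => X.card = n' + 1),
        (Nat.factorial n' : ℝ)⁻¹ * ∑ z ∈ MM X, H z := Finset.sum_le_sum keyX
    _ = (Nat.factorial n' : ℝ)⁻¹ * ∑ X ∈ ((Finset.univ : Finset L).powerset.filter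
          Finset.Nonempty).filter (fun X => X.card = n' + 1), ∑ z ∈ MM X, H z := by
        rw [Finset.mul_sum]
    _ = (Nat.factorial n' : ℝ)⁻¹ * ∑ z ∈ (((Finset.univ : Finset L).powerset.filter
          Finset.Nonempty).filter (fun X => X.card = n' + 1)).biUnion MM, H z := by
        rw [Finset.sum_biUnion hdisjX]
    _ ≤ (Nat.factorial n' : ℝ)⁻¹ * ∑ z ∈ Finset.univ ×ˢ Pset, H z := by
        apply mul_le_mul_of_nonneg_left _ (by positivity)
        exact Finset.sum_le_sum_of_subset_of_nonneg hsubD (fun z _ _ => hH0 z)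
    _ ≤ (Nat.factorial n' : ℝ)⁻¹ *
          ((Pset.card : ℝ) * (((12:ℝ)^(n'+1))⁻¹ * (geomConst L tm * 2^n'))) := by
        apply mul_le_mul_of_nonneg_left hDsum (by positivity)
    _ ≤ (Nat.factorial n' : ℝ)⁻¹ *
          (((Nat.factorial n' : ℝ) * 4^(n'+1)) * (((12:ℝ)^(n'+1))⁻¹ * (geomConst L tm * 2^n'))) := by
        apply mul_le_mul_of_nonneg_left _ (by positivity)
        apply mul_le_mul_of_nonneg_right (le_trans hPcard hfac4) (by positivity)
    _ = (4:ℝ)^(n'+1) * ((12:ℝ)^(n'+1))⁻¹ * (2:ℝ)^n' * geomConst L tm := by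
        field_simp
    _ = (1/2) * ((2:ℝ)/3)^(n'+1) * geomConst L tm := by rw [key4]

end VolumeEstimateAux

open VolumeEstimateAux in
/-- Key volume estimate for the cluster expansion: for any point `x` of a finite metric
space `L`, the sum over nonempty subsets `X ⊆ L`, trees `T` on `X` and subforests `F ⊆ T`
of `12^{-|X|} c_g(m_V)^{-|F|} c_g(m)^{-|T∖F|} e^{-m_V d(F) - m d(T∖F)} e^{-m̃ d(x,X)}`
is at most `c_g(m̃)`. -/
theorem volume_estimate {L : Type*} [MetricSpace L] [Fintype L] [Nonempty L]
    (m mV tm : ℝ) (hm : 0 < m) (hmV : 0 < mV) (htm : 0 < tm) :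
    ∀ x : L,
      (∑ X ∈ (Finset.univ : Finset L).powerset.filter Finset.Nonempty,
        ∑ T : {T : SimpleGraph {y // y ∈ X} // T.IsTree},
          ∑ F ∈ (T : SimpleGraph {y // y ∈ X}).edgeFinset.powerset,
            ((12 : ℝ) ^ X.card)⁻¹ *
              ((geomConst L mV) ^ F.card)⁻¹ *
              ((geomConst L m) ^
                ((T : SimpleGraph {y // y ∈ X}).edgeFinset.card - F.card))⁻¹ *
              Real.exp (-mV * edgeLength F -
                m * edgeLength ((T : SimpleGraph {y // y ∈ X}).edgeFinset \ F)) *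
              Real.exp (-tm * ⨅ y : {y // y ∈ X}, dist x (y : L))) ≤
        geomConst L tm := by
  intro x
  classical
  have hct0 : (0:ℝ) ≤ geomConst L tm := (geomConst_pos tm).le
  have hmaps : ∀ X ∈ (Finset.univ : Finset L).powerset.filter Finset.Nonempty,
      X.card ∈ Finset.Icc 1 (Fintype.card L) := by
    intro X hX
    have hne : X.Nonempty := (Finset.mem_filter.1 hX).2
    rw [Finset.mem_Icc]
    constructor
    · exact Finset.card_pos.2 hne
    · exact Finset.card_le_univ X
  rw [← Finset.sum_fiberwise_of_maps_to hmaps]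
  have hstep : ∀ q ∈ Finset.Icc 1 (Fintype.card L),
      (∑ X ∈ ((Finset.univ : Finset L).powerset.filter Finset.Nonempty).filter
          (fun X => X.card = q),
        ∑ T : {T : SimpleGraph {y // y ∈ X} // T.IsTree},
          ∑ F ∈ (T : SimpleGraph {y // y ∈ X}).edgeFinset.powerset,
            ((12 : ℝ) ^ X.card)⁻¹ *
              ((geomConst L mV) ^ F.card)⁻¹ *
              ((geomConst L m) ^
                ((T : SimpleGraph {y // y ∈ X}).edgeFinset.card - F.card))⁻¹ *
              Real.exp (-mV * edgeLength F -
                m * edgeLength ((T : SimpleGraph {y // y ∈ X}).edgeFinset \ F)) *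
              Real.exp (-tm * ⨅ y : {y // y ∈ X}, dist x (y : L)))
        ≤ (1/2) * ((2:ℝ)/3)^q * geomConst L tm := by
    intro q hq
    have hq1 : 1 ≤ q := (Finset.mem_Icc.1 hq).1
    obtain ⟨n', rfl⟩ : ∃ n', q = n' + 1 := ⟨q - 1, by omega⟩
    exact perq m mV tm x n'
  calc ∑ q ∈ Finset.Icc 1 (Fintype.card L),
        ∑ X ∈ ((Finset.univ : Finset L).powerset.filter Finset.Nonempty).filter
          (fun X => X.card = q),
        ∑ T : {T : SimpleGraph {y // y ∈ X} // T.IsTree},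
          ∑ F ∈ (T : SimpleGraph {y // y ∈ X}).edgeFinset.powerset,
            ((12 : ℝ) ^ X.card)⁻¹ *
              ((geomConst L mV) ^ F.card)⁻¹ *
              ((geomConst L m) ^
                ((T : SimpleGraph {y // y ∈ X}).edgeFinset.card - F.card))⁻¹ *
              Real.exp (-mV * edgeLength F -
                m * edgeLength ((T : SimpleGraph {y // y ∈ X}).edgeFinset \ F)) *
              Real.exp (-tm * ⨅ y : {y // y ∈ X}, dist x (y : L))
      ≤ ∑ q ∈ Finset.Icc 1 (Fintype.card L), (1/2) * ((2:ℝ)/3)^q * geomConst L tm :=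
        Finset.sum_le_sum hstep
    _ = (∑ q ∈ Finset.Icc 1 (Fintype.card L), ((2:ℝ)/3)^q) * ((1/2) * geomConst L tm) := by
        rw [Finset.sum_mul]
        apply Finset.sum_congr rfl
        intro q _
        ring
    _ ≤ 2 * ((1/2) * geomConst L tm) := by
        apply mul_le_mul_of_nonneg_right (geom_sum_bound (Fintype.card L)) (by positivity)
    _ = geomConst L tm := by ring
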